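/- For the f×f matrix Q with all entries 1 except Q_{12} = Q_{21} = 0 (f ≥ 3), the characteristic polynomial of Q is λ^{f−3} (λ − 1)(λ² + (1−f)λ + (2−f)); in particular Q has the two eigenvalues (f−1 ± √(f²+2f−7))/2, which are irrational. -/

import Mathlib

open Polynomial Matrix

set_option maxHeartbeats 1000000 in
set_option synthInstance.maxHeartbeats 400000 in
lemma charpoly_rect {m n : ℕ} (hn : n ≤ m) (A : Matrix (Fin m) (Fin n) ℝ)
    (B : Matrix (Fin n) (Fin m) ℝ) :
    (A * B).charpoly = X ^ (m - n) * (B * A).charpoly := by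
  apply RatFunc.algebraMap_injective ℝ
  set φ : ℝ[X] →+* RatFunc ℝ := (algebraMap ℝ[X] (RatFunc ℝ)) with hφ
  have hx : φ X ≠ 0 := by
    rw [hφ, RatFunc.algebraMap_X]
    exact RatFunc.X_ne_zero
  set x : RatFunc ℝ := φ X with hxdef
  set ψ : ℝ →+* RatFunc ℝ := φ.comp (C : ℝ →+* ℝ[X]) with hψ
  have key : ∀ (k : ℕ) (M : Matrix (Fin k) (Fin k) ℝ),
      φ M.charpoly = (x • (1 : Matrix (Fin k) (Fin k) (RatFunc ℝ)) - M.map ψ).det := by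
    intro k M
    rw [Matrix.charpoly, RingHom.map_det]
    congr 1
    ext i j
    simp only [RingHom.mapMatrix_apply, Matrix.map_apply]
    by_cases h : i = j
    · subst h
      simp [charmatrix_apply, Matrix.diagonal_apply, hψ, Matrix.sub_apply, Matrix.smul_apply,
        Matrix.one_apply]
      exact hxdef.symm
    · simp [charmatrix_apply, Matrix.diagonal_apply, h, hψ, Matrix.sub_apply, Matrix.smul_apply,
        Matrix.one_apply]
  rw [_root_.map_mul, map_pow, key, key]
  have hmap : (A * B).map ψ = A.map ψ * B.map ψ := by
    ext i j; simp [Matrix.mul_apply, map_sum]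
  have hmap' : (B * A).map ψ = B.map ψ * A.map ψ := by
    ext i j; simp [Matrix.mul_apply, map_sum]
  rw [hmap, hmap']
  set A' := A.map ψ
  set B' := B.map ψ
  have e1 : ∀ (k : ℕ) (M : Matrix (Fin k) (Fin k) (RatFunc ℝ)),
      (x • (1 : Matrix (Fin k) (Fin k) (RatFunc ℝ)) - M).det
        = x ^ k * ((1 : Matrix (Fin k) (Fin k) (RatFunc ℝ)) - x⁻¹ • M).det := by
    intro k M
    rw [show x • (1 : Matrix (Fin k) (Fin k) (RatFunc ℝ)) - M
        = x • ((1 : Matrix (Fin k) (Fin k) (RatFunc ℝ)) - x⁻¹ • M) by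
      rw [smul_sub, smul_smul, mul_inv_cancel₀ hx, one_smul]]
    rw [Matrix.det_smul]
    simp [Finset.card_univ]
  rw [e1, e1]
  have e2 : ((1 : Matrix (Fin m) (Fin m) (RatFunc ℝ)) - x⁻¹ • (A' * B')).det
      = ((1 : Matrix (Fin n) (Fin n) (RatFunc ℝ)) - x⁻¹ • (B' * A')).det := by
    have h1 : (1 : Matrix (Fin m) (Fin m) (RatFunc ℝ)) - x⁻¹ • (A' * B')
        = 1 + ((-x⁻¹) • A') * B' := by
      rw [Matrix.smul_mul, neg_smul, sub_eq_add_neg]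
    have h2 : (1 : Matrix (Fin n) (Fin n) (RatFunc ℝ)) - x⁻¹ • (B' * A')
        = 1 + B' * ((-x⁻¹) • A') := by
      rw [Matrix.mul_smul, neg_smul, sub_eq_add_neg]
    rw [h1, h2, Matrix.det_one_add_mul_comm]
  rw [e2, ← mul_assoc, ← pow_add, Nat.sub_add_cancel hn]

lemma sum3 {f : ℕ} (hf : 3 ≤ f) (c0 c1 d : ℝ) :
    ∑ j : Fin f, (if (j : ℕ) = 0 then c0 else if (j : ℕ) = 1 then c1 else d)
      = c0 + c1 + ((f : ℝ) - 2) * d := by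
  haveI : NeZero f := ⟨by omega⟩
  have hm : 1 % f = 1 := Nat.mod_eq_of_lt (by omega)
  have hfne : f ≠ 1 := by omega
  have h1v : ((1 : Fin f) : ℕ) = 1 := by simp [Fin.val_one', hm]
  have step : ∀ j : Fin f,
      (if (j : ℕ) = 0 then c0 else if (j : ℕ) = 1 then c1 else d)
        = (if j = 0 then c0 - d else 0) + (if j = 1 then c1 - d else 0) + d := by
    intro j
    by_cases hj0 : (j : ℕ) = 0
    · have hj : j = 0 := by ext; simpa using hj0
      simp [hj, hj0, hm, hfne]
    · by_cases hj1 : (j : ℕ) = 1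
      · have hj : j = 1 := by ext; rw [h1v, hj1]
        simp [hj, hj1, hj0, h1v, hm, hfne]
      · have hne0 : j ≠ 0 := by intro h; rw [h] at hj0; simp at hj0
        have hne1 : j ≠ 1 := by intro h; rw [h, h1v] at hj1; exact hj1 rfl
        simp [hj0, hj1, hne0, hne1]
  rw [Finset.sum_congr rfl (fun j _ => step j)]
  rw [Finset.sum_add_distrib, Finset.sum_add_distrib, Finset.sum_ite_eq' Finset.univ (0 : Fin f),
    Finset.sum_ite_eq' Finset.univ (1 : Fin f), Finset.sum_const, Finset.card_univ,
    Fintype.card_fin, nsmul_eq_mul]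
  simp only [Finset.mem_univ, if_true]
  ring

lemma sum_prod {f : ℕ} (hf : 3 ≤ f) (p0 p1 pd q0 q1 qd : ℝ) :
    ∑ j : Fin f, (if (j : ℕ) = 0 then p0 else if (j : ℕ) = 1 then p1 else pd)
        * (if (j : ℕ) = 0 then q0 else if (j : ℕ) = 1 then q1 else qd)
      = p0 * q0 + p1 * q1 + ((f : ℝ) - 2) * (pd * qd) := by
  rw [Finset.sum_congr rfl (fun j _ => by
    split_ifs <;> ring :
    ∀ j : Fin f, j ∈ (Finset.univ : Finset (Fin f)) → (if (j : ℕ) = 0 then p0 else if (j : ℕ) = 1 then p1 else pd)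
        * (if (j : ℕ) = 0 then q0 else if (j : ℕ) = 1 then q1 else qd)
      = (if (j : ℕ) = 0 then p0 * q0 else if (j : ℕ) = 1 then p1 * q1 else pd * qd))]
  exact sum3 hf _ _ _

def Amat (f : ℕ) : Matrix (Fin f) (Fin 3) ℝ :=
  fun i k => if (i : ℕ) = 0 then ![1, 1, 0] k else if (i : ℕ) = 1 then ![1, 0, 1] k
    else ![1, 0, 0] k

def Bmat (f : ℕ) : Matrix (Fin 3) (Fin f) ℝ :=
  fun k j => if (j : ℕ) = 0 then ![1, 0, -1] k else if (j : ℕ) = 1 then ![1, -1, 0] k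
    else ![1, 0, 0] k

lemma charpoly_N (f : ℕ) :
    (!![(f : ℝ), 1, 1; -1, 0, -1; -1, -1, 0]).charpoly
      = (X - 1) * (X ^ 2 + C ((1 : ℝ) - f) * X + C ((2 : ℝ) - f)) := by
  rw [Matrix.charpoly, Matrix.det_fin_three]
  simp only [charmatrix_apply, Matrix.diagonal_apply, Fin.ext_iff, Matrix.cons_val',
    Matrix.cons_val_zero, Matrix.cons_val_one, Matrix.head_cons, Matrix.empty_val',
    Matrix.cons_val_fin_one, Matrix.head_fin_const, map_sub, map_neg, _root_.map_one,
    map_natCast, map_zero, Fin.val_zero, Fin.val_one, Fin.val_two]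
  norm_num [Matrix.vecHead, Matrix.vecTail, map_ofNat, Matrix.cons_val_two, Matrix.tail_cons, Matrix.head_cons]
  ring

lemma eigen_aux (f : ℕ) (hf : 3 ≤ f) (Q : Matrix (Fin f) (Fin f) ℝ)
    (hQ : ∀ i j, Q i j =
      if ((i : ℕ) = 0 ∧ (j : ℕ) = 1) ∨ ((i : ℕ) = 1 ∧ (j : ℕ) = 0) then 0 else 1)
    (lam : ℝ) (hlam : lam ^ 2 = ((f : ℝ) - 1) * lam + ((f : ℝ) - 2)) :
    ∃ u : Fin f → ℝ, u ≠ 0 ∧ Q.mulVec u = lam • u := by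
  set a : ℝ := lam - ((f : ℝ) - 2) with ha
  refine ⟨fun j => if (j : ℕ) = 0 then a else if (j : ℕ) = 1 then a else 2, ?_, ?_⟩
  · intro h
    have h2 := congrFun h ⟨2, by omega⟩
    norm_num at h2
  · funext i
    simp only [Matrix.mulVec, dotProduct, Pi.smul_apply, smul_eq_mul]
    by_cases hi0 : (i : ℕ) = 0
    · rw [Finset.sum_congr rfl (fun j _ => by
        rw [hQ]
        split_ifs <;> first | (exfalso; omega) | ring :
        ∀ j ∈ Finset.univ, Q i j * (if (j : ℕ) = 0 then a else if (j : ℕ) = 1 then a else 2)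
          = (if (j : ℕ) = 0 then a else if (j : ℕ) = 1 then 0 else 2))]
      rw [sum3 hf, hi0]
      norm_num [ha]
      linear_combination -hlam
    · by_cases hi1 : (i : ℕ) = 1
      · rw [Finset.sum_congr rfl (fun j _ => by
          rw [hQ]
          split_ifs <;> first | (exfalso; omega) | ring :
          ∀ j ∈ Finset.univ, Q i j * (if (j : ℕ) = 0 then a else if (j : ℕ) = 1 then a else 2)
            = (if (j : ℕ) = 0 then 0 else if (j : ℕ) = 1 then a else 2))]
        rw [sum3 hf, hi1]
        norm_num [ha]
        linear_combination -hlam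
      · rw [Finset.sum_congr rfl (fun j _ => by
          rw [hQ]
          split_ifs <;> first | (exfalso; omega) | ring :
          ∀ j ∈ Finset.univ, Q i j * (if (j : ℕ) = 0 then a else if (j : ℕ) = 1 then a else 2)
            = (if (j : ℕ) = 0 then a else if (j : ℕ) = 1 then a else 2))]
        rw [sum3 hf]
        simp only [hi0, hi1, if_false]
        ring

open Polynomial in
theorem Q_charpoly_and_irrational_eigenvalues (f : ℕ) (hf : 3 ≤ f)
    (Q : Matrix (Fin f) (Fin f) ℝ)
    (hQ : ∀ i j, Q i j =
      if ((i : ℕ) = 0 ∧ (j : ℕ) = 1) ∨ ((i : ℕ) = 1 ∧ (j : ℕ) = 0) then 0 else 1) :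
    Q.charpoly = X ^ (f - 3) * (X - 1) *
        (X ^ 2 + C ((1 : ℝ) - f) * X + C ((2 : ℝ) - f)) ∧
      (∃ u : Fin f → ℝ, u ≠ 0 ∧
        Q.mulVec u = ((((f : ℝ) - 1) + Real.sqrt ((f : ℝ) ^ 2 + 2 * f - 7)) / 2) • u) ∧
      (∃ w : Fin f → ℝ, w ≠ 0 ∧
        Q.mulVec w = ((((f : ℝ) - 1) - Real.sqrt ((f : ℝ) ^ 2 + 2 * f - 7)) / 2) • w) ∧
      Irrational ((((f : ℝ) - 1) + Real.sqrt ((f : ℝ) ^ 2 + 2 * f - 7)) / 2) ∧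
      Irrational ((((f : ℝ) - 1) - Real.sqrt ((f : ℝ) ^ 2 + 2 * f - 7)) / 2) := by
  have hD : (0 : ℝ) ≤ (f : ℝ) ^ 2 + 2 * f - 7 := by
    have : (3 : ℝ) ≤ (f : ℝ) := by exact_mod_cast hf
    nlinarith
  have hs : Real.sqrt ((f : ℝ) ^ 2 + 2 * f - 7) ^ 2 = (f : ℝ) ^ 2 + 2 * f - 7 :=
    Real.sq_sqrt hD
  constructor
  · -- charpoly
    have hAB : Q = Amat f * Bmat f := by
      ext i j
      rw [hQ, Matrix.mul_apply, Fin.sum_univ_three]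
      simp only [Amat, Bmat]
      norm_num
      split_ifs <;> first | (exfalso; omega) | norm_num [Matrix.cons_val_two, Matrix.tail_cons, Matrix.head_cons]
    have hBA : Bmat f * Amat f = !![(f : ℝ), 1, 1; -1, 0, -1; -1, -1, 0] := by
      ext k l
      rw [Matrix.mul_apply]
      rw [Finset.sum_congr rfl (fun j _ => by
        simp only [Amat, Bmat] :
        ∀ j ∈ Finset.univ, Bmat f k j * Amat f j l
          = (if (j : ℕ) = 0 then ![1, 0, -1] k else if (j : ℕ) = 1 then ![1, -1, 0] k
              else ![1, 0, 0] k)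
            * (if (j : ℕ) = 0 then ![1, 1, 0] l else if (j : ℕ) = 1 then ![1, 0, 1] l
              else ![1, 0, 0] l))]
      rw [sum_prod hf]
      fin_cases k <;> fin_cases l <;> norm_num
    rw [hAB, charpoly_rect (by omega) (Amat f) (Bmat f), hBA, charpoly_N, mul_assoc]
  refine ⟨?_, ?_, ?_, ?_⟩
  · exact eigen_aux f hf Q hQ _ (by linear_combination hs / 4)
  · exact eigen_aux f hf Q hQ _ (by linear_combination hs / 4)
  all_goals {
    have h7 : 7 ≤ f ^ 2 + 2 * f := by nlinarith
    have hcast : (f : ℝ) ^ 2 + 2 * f - 7 = ((f ^ 2 + 2 * f - 7 : ℕ) : ℝ) := by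
      rw [Nat.cast_sub h7]; push_cast; ring
    have hns : ¬ IsSquare (f ^ 2 + 2 * f - 7) := by
      rintro ⟨r, hk⟩
      have hk' : r * r + 7 = f ^ 2 + 2 * f := by
        rw [← hk, Nat.sub_add_cancel h7]
      have h1 : f ≤ r := by nlinarith
      have h2 : r ≤ f := by nlinarith
      have : r = f := le_antisymm h2 h1
      subst this
      have h9 : 7 = 2 * r := by linarith [pow_two r]
      omega
    have hirr : Irrational (Real.sqrt ((f ^ 2 + 2 * f - 7 : ℕ) : ℝ)) :=
      irrational_sqrt_natCast_iff.mpr hns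
    have hf1 : ((f : ℝ) - 1) = ((f - 1 : ℕ) : ℝ) := by
      rw [Nat.cast_sub (by omega)]; push_cast; ring
    rw [hcast, hf1]
    first
    | exact ((hirr.natCast_add (f - 1)).div_natCast (by norm_num))
    | exact ((hirr.natCast_sub (f - 1)).div_natCast (by norm_num))
  }
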